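/- Let x* ∈ (0,1], K, K' > 0, and let r: X → [0, x*] be a measurable function on a probability space X whose CDF G satisfies G(x*/K) ≤ exp(-1/K'). Let X_1, ..., X_m, X_{m+1} be i.i.d. samples from X. Then P( K·max_{j≤m} r(X_j) ≤ r(X_{m+1}) ) ≤ exp(-m/K'). -/
import Mathlib


open MeasureTheory Finset

theorem empirical_sensitivity_bound
    {X : Type*} [MeasurableSpace X] (ν : Measure X) [IsProbabilityMeasure ν]
    (r : X → ℝ) (hr : Measurable r)
    (xstar : ℝ) (hx0 : 0 < xstar) (hx1 : xstar ≤ 1)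
    (hrange : ∀ x, r x ∈ Set.Icc 0 xstar)
    (K K' : ℝ) (hK : 0 < K) (hK' : 0 < K')
    (G : ℝ → ℝ) (hG : ∀ y, G y = (ν {x | r x ≤ y}).toReal)
    (hcdf : G (xstar / K) ≤ Real.exp (-1 / K'))
    (m : ℕ) (hm : 0 < m) :
    ((Measure.pi (fun _ : Fin (m + 1) => ν))
        {ω | K * (univ : Finset (Fin m)).sup' (by simpa [Finset.univ_nonempty_iff] using Fin.pos_iff_nonempty.mp hm)
              (fun j => r (ω j.castSucc)) ≤ r (ω (Fin.last m))}).toReal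
      ≤ Real.exp (-(m : ℝ) / K') := by
  set A : Set X := {x | r x ≤ xstar / K} with hA
  set s : Fin (m + 1) → Set X := fun i => if i = Fin.last m then Set.univ else A with hs
  have hsub : {ω : Fin (m+1) → X | K * (univ : Finset (Fin m)).sup'
        (by simpa [Finset.univ_nonempty_iff] using Fin.pos_iff_nonempty.mp hm)
        (fun j => r (ω j.castSucc)) ≤ r (ω (Fin.last m))} ⊆ Set.pi Set.univ s := by
    intro ω hω i _
    by_cases hi : i = Fin.last m
    · simp [hs, hi]
    · simp only [hs, if_neg hi]
      have hsup : ((univ : Finset (Fin m)).sup'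
          (by simpa [Finset.univ_nonempty_iff] using Fin.pos_iff_nonempty.mp hm)
          (fun j => r (ω j.castSucc))) ≤ xstar / K := by
        rw [le_div_iff₀ hK]
        calc _ = K * _ := mul_comm _ _
        _ ≤ r (ω (Fin.last m)) := hω
        _ ≤ xstar := (hrange _).2
      have hle := Finset.le_sup' (fun j => r (ω j.castSucc))
        (Finset.mem_univ (i.castPred hi))
      have : r (ω i) ≤ xstar / K := by
        rw [← Fin.castSucc_castPred i hi]
        exact hle.trans hsup
      exact this
  have hν : ν A = ENNReal.ofReal (G (xstar / K)) := by
    rw [hG, ENNReal.ofReal_toReal (measure_ne_top _ _)]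
  calc ((Measure.pi (fun _ : Fin (m + 1) => ν)) _).toReal
      ≤ ((Measure.pi (fun _ : Fin (m + 1) => ν)) (Set.pi Set.univ s)).toReal :=
        ENNReal.toReal_mono (measure_ne_top _ _) (measure_mono hsub)
    _ = (∏ i, ν (s i)).toReal := by rw [Measure.pi_pi]
    _ = ((ν A) ^ m).toReal := by
        rw [Fin.prod_univ_castSucc]
        have h1 : ∀ j : Fin m, s j.castSucc = A := fun j => by
          simp [hs, (Fin.castSucc_lt_last j).ne]
        rw [show s (Fin.last m) = Set.univ from if_pos rfl]
        simp [h1, Finset.prod_const]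
    _ = (ν A).toReal ^ m := by simp [ENNReal.toReal_pow]
    _ = G (xstar / K) ^ m := by rw [hG]
    _ ≤ Real.exp (-1 / K') ^ m := by
        apply pow_le_pow_left₀ _ hcdf
        rw [hG]; exact ENNReal.toReal_nonneg
    _ = Real.exp (-(m : ℝ) / K') := by
        rw [← Real.exp_nat_mul]
        ring_nf
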